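/- Let $(X,q)$ be a mobi space over a mobi algebra $A$. Then $q(x,\text{½},q(x,a,y))=q(x,a,q(x,\text{½},y))$ for all $x,y\in X$, $a\in A$. -/
import Mathlib


structure MobiAlgebra (A : Type*) where
  p : A → A → A → A
  zero : A
  half : A
  one : A
  A1 : p one half zero = half
  A2 : ∀ a, p zero a one = a
  A3 : ∀ a b, p a b a = a
  A4 : ∀ a b, p a zero b = a
  A5 : ∀ a b, p a one b = b
  A6 : ∀ a b₁ b₂, p a half b₁ = p a half b₂ → b₁ = b₂
  A7 : ∀ a b c₁ c₂ c₃, p a (p c₁ c₂ c₃) b = p (p a c₁ b) c₂ (p a c₃ b)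
  A8 : ∀ a₁ a₂ b₁ b₂ c,
    p (p a₁ c b₁) half (p a₂ c b₂) = p (p a₁ half a₂) c (p b₁ half b₂)

structure MobiSpace {A : Type*} (M : MobiAlgebra A) (X : Type*) where
  q : X → A → X → X
  X1 : ∀ x y, q x M.zero y = x
  X2 : ∀ x y, q x M.one y = y
  X3 : ∀ x a, q x a x = x
  X4 : ∀ x y₁ y₂, q x M.half y₁ = q x M.half y₂ → y₁ = y₂
  X5 : ∀ x y a b c, q (q x a y) b (q x c y) = q x (M.p a b c) y

theorem q_half_comm {A X : Type*} (M : MobiAlgebra A) (S : MobiSpace M X)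
    (x y : X) (a : A) :
    S.q x M.half (S.q x a y) = S.q x a (S.q x M.half y) := by
  -- half-commutativity: p u ½ v = p v ½ u
  have hc : ∀ u v : A, M.p u M.half v = M.p v M.half u := by
    intro u v
    have h := M.A7 u v M.one M.half M.zero
    rw [M.A1, M.A5, M.A4] at h
    exact h
  -- p c ½ 0 = p 0 c ½
  have h2 : ∀ c : A, M.p c M.half M.zero = M.p M.zero c M.half := by
    intro c
    have h := M.A8 M.zero M.zero M.one M.zero c
    rw [M.A2, M.A3, M.A3, M.A1] at h
    exact h
  -- key algebra identity: p 0 ½ a = p 0 a ½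
  have key : M.p M.zero M.half a = M.p M.zero a M.half := by
    rw [hc M.zero a, h2 a]
  calc S.q x M.half (S.q x a y)
      = S.q (S.q x M.zero y) M.half (S.q x a y) := by rw [S.X1]
    _ = S.q x (M.p M.zero M.half a) y := S.X5 x y M.zero M.half a
    _ = S.q x (M.p M.zero a M.half) y := by rw [key]
    _ = S.q (S.q x M.zero y) a (S.q x M.half y) := (S.X5 x y M.zero a M.half).symm
    _ = S.q x a (S.q x M.half y) := by rw [S.X1]
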